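/- Let Q ∈ {0,1}^{m×n} with a distinguished column x. Define colaug(Q,x) as the family of subsets D ⊆ {1,...,m} such that replacing column x of Q by the indicator vector of D yields a matrix with the same transversal matroid bases as Q. Then the Hasse diagram on colaug(Q,x), with an edge D_i → D_j whenever D_i ⊊ D_j and |D_j \ D_i| = 1, is weakly connected. Moreover, colaug(Q,x) has a unique maximal element under inclusion, which equals the union of all elements of colaug(Q,x). -/

import Mathlib

open Classical

/-- Independence in the transversal matroid of a binary matrix `Q` (rows as
ground set): `Z` is matchable injectively into the columns via `1`-entries. -/
def TIndep {α β : Type*} (Q : α → β → Bool) (Z : Finset α) : Prop :=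
  ∃ φ : α → β, Set.InjOn φ Z ∧ ∀ z ∈ Z, Q z (φ z) = true

/-- Bases of the transversal matroid of `Q`: the maximal independent row sets. -/
def TBases {α β : Type*} (Q : α → β → Bool) : Set (Finset α) :=
  {B | TIndep Q B ∧ ∀ B', TIndep Q B' → B ⊆ B' → B = B'}

/-- Replace the column `x` of `Q` by the boolean column `d`. -/
def replaceCol {α β : Type*} [DecidableEq β] (Q : α → β → Bool) (x : β)
    (d : α → Bool) : α → β → Bool :=
  fun i j => if j = x then d i else Q i j

/-- The solution set of matroid-preserving column augmentations: all `D` such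
that replacing column `x` of `Q` by the indicator vector `𝟙_D` yields a matrix
with the same transversal matroid bases as `Q`. -/
def colaug {α β : Type*} [DecidableEq α] [DecidableEq β]
    (Q : α → β → Bool) (x : β) : Set (Finset α) :=
  {D | TBases (replaceCol Q x fun i => if i ∈ D then true else false) = TBases Q}

section Aux

variable {α β : Type*}

lemma TIndep.subset' {Q : α → β → Bool} {Z Y : Finset α} (h : TIndep Q Z) (hY : Y ⊆ Z) :
    TIndep Q Y := by
  obtain ⟨φ, hinj, hφ⟩ := h
  exact ⟨φ, hinj.mono (Finset.coe_subset.2 hY), fun z hz => hφ z (hY hz)⟩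

lemma exists_basis [Fintype α] {Q : α → β → Bool} {Z : Finset α} (h : TIndep Q Z) :
    ∃ B ∈ TBases Q, Z ⊆ B := by
  obtain ⟨B, hB, hmax⟩ := Set.Finite.exists_maximalFor Finset.card
    {B : Finset α | TIndep Q B ∧ Z ⊆ B} (Set.toFinite _) ⟨Z, h, subset_rfl⟩
  refine ⟨B, ⟨hB.1, ?_⟩, hB.2⟩
  intro B' hB' hBB'
  exact Finset.eq_of_subset_of_card_le hBB'
    (hmax ⟨hB', hB.2.trans hBB'⟩ (Finset.card_le_card hBB'))

lemma tindep_iff_bases [Fintype α] (Q : α → β → Bool) (Z : Finset α) :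
    TIndep Q Z ↔ ∃ B ∈ TBases Q, Z ⊆ B := by
  constructor
  · exact exists_basis
  · rintro ⟨B, hB, hZB⟩
    exact hB.1.subset' hZB

lemma tbases_congr {Q1 Q2 : α → β → Bool} (h : ∀ Z, TIndep Q1 Z ↔ TIndep Q2 Z) :
    TBases Q1 = TBases Q2 := by
  ext B
  simp only [TBases, Set.mem_setOf_eq]
  constructor
  · rintro ⟨h1, h2⟩
    exact ⟨(h B).1 h1, fun B' hB' hsub => h2 B' ((h B').2 hB') hsub⟩
  · rintro ⟨h1, h2⟩
    exact ⟨(h B).2 h1, fun B' hB' hsub => h2 B' ((h B').1 hB') hsub⟩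

variable [DecidableEq α] [DecidableEq β]

lemma tindep_mono {Q : α → β → Bool} {x : β} {D E Z : Finset α} (hDE : D ⊆ E)
    (h : TIndep (replaceCol Q x fun i => if i ∈ D then true else false) Z) :
    TIndep (replaceCol Q x fun i => if i ∈ E then true else false) Z := by
  obtain ⟨φ, hinj, hφ⟩ := h
  refine ⟨φ, hinj, fun z hz => ?_⟩
  have hz' := hφ z hz
  unfold replaceCol at hz' ⊢
  by_cases hzx : φ z = x
  · rw [if_pos hzx] at hz' ⊢
    have hzD : z ∈ D := by
      by_contra hzD
      simp [hzD] at hz'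
    simp [hDE hzD]
  · rw [if_neg hzx] at hz' ⊢
    exact hz'

lemma tindep_key {Q : α → β → Bool} {x : β} {E Z : Finset α}
    (h : TIndep (replaceCol Q x fun i => if i ∈ E then true else false) Z) :
    TIndep Q Z ∨ ∃ z ∈ Z, z ∈ E ∧ ∀ D : Finset α, z ∈ D →
      TIndep (replaceCol Q x fun i => if i ∈ D then true else false) Z := by
  obtain ⟨φ, hinj, hφ⟩ := h
  by_cases hx : ∃ z ∈ Z, φ z = x
  · obtain ⟨z, hz, hzx⟩ := hx
    have hzE : z ∈ E := by
      have := hφ z hz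
      unfold replaceCol at this
      rw [if_pos hzx] at this
      by_contra hzE
      simp [hzE] at this
    refine Or.inr ⟨z, hz, hzE, fun D hzD => ⟨φ, hinj, fun w hw => ?_⟩⟩
    by_cases hwx : φ w = x
    · have hwz : w = z := hinj hw hz (hwx.trans hzx.symm)
      unfold replaceCol
      rw [if_pos hwx, hwz]
      simp [hzD]
    · have := hφ w hw
      unfold replaceCol at this ⊢
      rw [if_neg hwx] at this ⊢
      exact this
  · push_neg at hx
    refine Or.inl ⟨φ, hinj, fun w hw => ?_⟩
    have := hφ w hw
    unfold replaceCol at this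
    rw [if_neg (hx w hw)] at this
    exact this

lemma mem_colaug_iff [Fintype α] {Q : α → β → Bool} {x : β} {D : Finset α} :
    D ∈ colaug Q x ↔ ∀ Z : Finset α,
      TIndep (replaceCol Q x fun i => if i ∈ D then true else false) Z ↔ TIndep Q Z := by
  constructor
  · intro h Z
    have h' : TBases (replaceCol Q x fun i => if i ∈ D then true else false) = TBases Q := h
    rw [tindep_iff_bases, tindep_iff_bases, h']
  · intro h
    exact tbases_congr h

lemma base_mem_colaug [Fintype α] (Q : α → β → Bool) (x : β) :
    (Finset.univ.filter fun i => Q i x = true) ∈ colaug Q x := by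
  have heq : (replaceCol Q x fun i =>
      if i ∈ Finset.univ.filter (fun i => Q i x = true) then true else false) = Q := by
    funext i j
    unfold replaceCol
    by_cases hj : j = x
    · rw [if_pos hj, hj]
      simp only [Finset.mem_filter, Finset.mem_univ, true_and]
      cases Q i x <;> simp
    · rw [if_neg hj]
  show TBases _ = TBases Q
  rw [heq]

lemma colaug_sandwich [Fintype α] {Q : α → β → Bool} {x : β} {D E F : Finset α}
    (hD : D ∈ colaug Q x) (hF : F ∈ colaug Q x) (h1 : D ⊆ E) (h2 : E ⊆ F) :
    E ∈ colaug Q x := by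
  rw [mem_colaug_iff] at hD hF ⊢
  intro Z
  exact ⟨fun h => (hF Z).1 (tindep_mono h2 h), fun h => tindep_mono h1 ((hD Z).2 h)⟩

lemma colaug_union [Fintype α] {Q : α → β → Bool} {x : β} {D D' : Finset α}
    (hD : D ∈ colaug Q x) (hD' : D' ∈ colaug Q x) : D ∪ D' ∈ colaug Q x := by
  rw [mem_colaug_iff] at hD hD' ⊢
  intro Z
  constructor
  · intro h
    rcases tindep_key h with h | ⟨z, _, hzE, hall⟩
    · exact h
    · rcases Finset.mem_union.1 hzE with hz | hz
      · exact (hD Z).1 (hall D hz)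
      · exact (hD' Z).1 (hall D' hz)
  · intro h
    exact tindep_mono Finset.subset_union_left ((hD Z).2 h)

lemma dmax_mem_colaug [Fintype α] (Q : α → β → Bool) (x : β) :
    (Finset.univ.filter fun i => ∃ D ∈ colaug Q x, i ∈ D) ∈ colaug Q x := by
  rw [mem_colaug_iff]
  intro Z
  constructor
  · intro h
    rcases tindep_key h with h | ⟨z, _, hzE, hall⟩
    · exact h
    · obtain ⟨D, hD, hzD⟩ := (Finset.mem_filter.1 hzE).2
      exact (mem_colaug_iff.1 hD Z).1 (hall D hzD)
  · intro h
    have h0 := base_mem_colaug Q x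
    have h1 : TIndep (replaceCol Q x fun i =>
        if i ∈ Finset.univ.filter (fun i => Q i x = true) then true else false) Z :=
      (mem_colaug_iff.1 h0 Z).2 h
    refine tindep_mono ?_ h1
    intro i hi
    exact Finset.mem_filter.2 ⟨Finset.mem_univ _, _, h0, hi⟩

lemma reach_up [Fintype α] {Q : α → β → Bool} {x : β} {B : Finset α}
    (hB : B ∈ colaug Q x) :
    ∀ n (A : Finset α), A ∈ colaug Q x → A ⊆ B → (B \ A).card = n →
      Relation.ReflTransGen (fun A B : Finset α =>
        A ∈ colaug Q x ∧ B ∈ colaug Q x ∧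
          ((A ⊆ B ∧ (B \ A).card = 1) ∨ (B ⊆ A ∧ (A \ B).card = 1))) A B := by
  intro n
  induction n with
  | zero =>
    intro A _ hAB hcard
    have : B ⊆ A := Finset.sdiff_eq_empty_iff_subset.1 (Finset.card_eq_zero.1 hcard)
    rw [Finset.Subset.antisymm hAB this]
  | succ n ih =>
    intro A hA hAB hcard
    have hne : (B \ A).Nonempty := Finset.card_pos.1 (by omega)
    obtain ⟨i, hi⟩ := hne
    have hiB : i ∈ B := (Finset.mem_sdiff.1 hi).1
    have hiA : i ∉ A := (Finset.mem_sdiff.1 hi).2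
    have hsub : insert i A ⊆ B := Finset.insert_subset hiB hAB
    have hA' : insert i A ∈ colaug Q x :=
      colaug_sandwich hA hB (Finset.subset_insert _ _) hsub
    have hstep : (insert i A) \ A = {i} := by
      rw [Finset.insert_sdiff_of_notMem _ hiA, Finset.sdiff_self]
      rfl
    refine Relation.ReflTransGen.head ⟨hA, hA', Or.inl ⟨Finset.subset_insert _ _, ?_⟩⟩
      (ih (insert i A) hA' hsub ?_)
    · rw [hstep, Finset.card_singleton]
    · rw [Finset.sdiff_insert, Finset.card_erase_of_mem hi, hcard]
      omega

end Aux

/-- **The whole set of column augmentations can be traversed by single-element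
additions/deletions.** The Hasse diagram on `colaug(Q, x)` (edges between sets
differing in exactly one element) is weakly connected, and `colaug(Q, x)` has a
unique maximal element, namely the union of all its elements. -/
theorem colaug_hasse_connected_and_max {α β : Type*} [Fintype α] [Fintype β]
    [DecidableEq α] [DecidableEq β] (Q : α → β → Bool) (x : β) :
    (∀ D ∈ colaug Q x, ∀ D' ∈ colaug Q x,
      Relation.ReflTransGen (fun A B : Finset α =>
        A ∈ colaug Q x ∧ B ∈ colaug Q x ∧
          ((A ⊆ B ∧ (B \ A).card = 1) ∨ (B ⊆ A ∧ (A \ B).card = 1))) D D') ∧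
    ∃ Dmax ∈ colaug Q x, (∀ D ∈ colaug Q x, D ⊆ Dmax) ∧
      ∀ i, i ∈ Dmax ↔ ∃ D ∈ colaug Q x, i ∈ D := by
  set r := fun A B : Finset α =>
    A ∈ colaug Q x ∧ B ∈ colaug Q x ∧
      ((A ⊆ B ∧ (B \ A).card = 1) ∨ (B ⊆ A ∧ (A \ B).card = 1)) with hr
  have hsymm : Symmetric r := by
    rintro A B ⟨h1, h2, h3 | h3⟩
    · exact ⟨h2, h1, Or.inr h3⟩
    · exact ⟨h2, h1, Or.inl h3⟩
  constructor
  · intro D hD D' hD'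
    have hU : D ∪ D' ∈ colaug Q x := colaug_union hD hD'
    have p1 : Relation.ReflTransGen r D (D ∪ D') :=
      reach_up hU _ D hD Finset.subset_union_left rfl
    have p2 : Relation.ReflTransGen r D' (D ∪ D') :=
      reach_up hU _ D' hD' Finset.subset_union_right rfl
    exact p1.trans ((@Relation.ReflTransGen.symmetric _ r ⟨fun _ _ h => hsymm h⟩).symm _ _ p2)
  · refine ⟨Finset.univ.filter fun i => ∃ D ∈ colaug Q x, i ∈ D,
      dmax_mem_colaug Q x, ?_, ?_⟩
    · intro D hD i hi
      exact Finset.mem_filter.2 ⟨Finset.mem_univ _, D, hD, hi⟩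
    · intro i
      simp [Finset.mem_filter]
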